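/- For every ε > 0 and θ ≥ 0 there is a constant C = C(ε,θ) such that for all T ≥ 2, ∑_{a,b ≤ T^θ} ∑ (a b m₁ m₂ n₁ n₂)^{−1/2} ≤ C T^{θ+2ε}, where the inner sum runs over positive integers m₁, m₂, n₁, n₂ and nonzero integers h satisfying m₁ m₂ n₁ n₂ ≤ T^{2+ε}, a m₁ m₂ − b n₁ n₂ = h, and 0 < |h| ≤ √(a b m₁ m₂ n₁ n₂) · T^{−1+ε}. -/

import Mathlib

set_option maxHeartbeats 1000000
open Finset

lemma div_bound (δ : ℝ) (hδ : 0 < δ) :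
    ∃ C : ℝ, 1 ≤ C ∧ ∀ n : ℕ, 1 ≤ n → (n.divisors.card : ℝ) ≤ C * (n : ℝ) ^ δ := by
  set r : ℝ := (2 : ℝ) ^ δ with hr
  have hr1 : 1 < r := (Real.one_lt_rpow_iff_of_pos (by norm_num)).2 (Or.inl ⟨one_lt_two, hδ⟩)
  set c₀ : ℝ := 1 + 1 / (r - 1) with hc₀def
  have hrpos : 0 < r - 1 := by linarith
  have hc₀ : 1 ≤ c₀ := by
    have h2 : 0 ≤ 1 / (r - 1) := by positivity
    rw [hc₀def]; linarith
  have hcr : 1 ≤ c₀ * (r - 1) := by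
    have e : c₀ * (r - 1) = r := by rw [hc₀def]; field_simp; ring
    rw [e]; linarith
  set B : ℕ := ⌈(2 : ℝ) ^ (1 / δ)⌉₊ with hB
  refine ⟨c₀ ^ (B + 1), one_le_pow₀ hc₀, ?_⟩
  intro n hn
  have hn0 : n ≠ 0 := by omega
  set w : ℕ → ℝ := fun p => if p ≤ B then c₀ else 1 with hw
  -- pointwise factor bound
  have hfac : ∀ p ∈ n.primeFactors, ((n.factorization p + 1 : ℕ) : ℝ) ≤
      w p * (((p : ℝ) ^ (n.factorization p)) ^ δ) := by
    intro p hp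
    have hprime := Nat.prime_of_mem_primeFactors hp
    have hp2 : (2 : ℝ) ≤ (p : ℝ) := by exact_mod_cast hprime.two_le
    set k := n.factorization p with hk
    have hpow : ((p : ℝ) ^ k) ^ δ = ((p : ℝ) ^ δ) ^ k := by
      rw [← Real.rpow_natCast (p : ℝ) k, ← Real.rpow_mul (by positivity), mul_comm,
        Real.rpow_mul (by positivity), Real.rpow_natCast]
    rw [hpow]
    have hrp : r ≤ (p : ℝ) ^ δ := Real.rpow_le_rpow (by norm_num) hp2 hδ.le
    by_cases hpB : p ≤ B
    · -- small prime
      have h1 : (1 : ℝ) + k * (r - 1) ≤ r ^ k := by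
        have := one_add_mul_le_pow (a := r - 1) (by linarith) k
        simpa [add_sub_cancel] using this
      have h2 : r ^ k ≤ ((p : ℝ) ^ δ) ^ k := by
        apply pow_le_pow_left₀ (by linarith) hrp
      have h3 : ((k + 1 : ℕ) : ℝ) ≤ c₀ * (1 + k * (r - 1)) := by
        push_cast
        have hk0 : (0 : ℝ) ≤ (k : ℝ) := by positivity
        nlinarith
      have hwp : w p = c₀ := if_pos hpB
      rw [hwp]
      calc ((k + 1 : ℕ) : ℝ) ≤ c₀ * (1 + k * (r - 1)) := h3
        _ ≤ c₀ * r ^ k := by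
            apply mul_le_mul_of_nonneg_left h1 (by linarith)
        _ ≤ c₀ * ((p : ℝ) ^ δ) ^ k := by
            apply mul_le_mul_of_nonneg_left h2 (by linarith)
    · -- large prime
      have hwp : w p = 1 := if_neg hpB
      rw [hwp, one_mul]
      have hpB' : (2 : ℝ) ^ (1 / δ) ≤ (p : ℝ) := by
        have h1 : ((2 : ℝ) ^ (1 / δ)) ≤ (B : ℝ) := Nat.le_ceil _
        have h2 : (B : ℝ) ≤ (p : ℝ) := by
          have : B ≤ p := le_of_lt (lt_of_not_ge hpB)
          exact_mod_cast this
        linarith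
      have h2p : (2 : ℝ) ≤ (p : ℝ) ^ δ := by
        have := Real.rpow_le_rpow (by positivity) hpB' hδ.le
        rwa [← Real.rpow_mul (by norm_num), one_div_mul_cancel hδ.ne', Real.rpow_one] at this
      calc ((k + 1 : ℕ) : ℝ) ≤ (2 : ℝ) ^ k := by
            exact_mod_cast Nat.lt_two_pow_self (n := k)
        _ ≤ ((p : ℝ) ^ δ) ^ k := pow_le_pow_left₀ (by norm_num) h2p k
  -- assemble
  have hcast : (n.divisors.card : ℝ) = ∏ p ∈ n.primeFactors, ((n.factorization p + 1 : ℕ) : ℝ) := by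
    rw [Nat.card_divisors hn0]
    push_cast
    rfl
  have hprodn : ∏ p ∈ n.primeFactors, (p : ℝ) ^ (n.factorization p) = (n : ℝ) := by
    have h1 : ∏ p ∈ n.primeFactors, p ^ n.factorization p = n := by
      rw [← Nat.support_factorization]
      exact Nat.factorization_prod_pow_eq_self hn0
    conv_rhs => rw [← h1]
    rw [Nat.cast_prod]
    push_cast
    rfl
  have step1 : (n.divisors.card : ℝ) ≤
      (∏ p ∈ n.primeFactors, w p) * ((n : ℝ) ^ δ) := by
    rw [hcast]
    calc ∏ p ∈ n.primeFactors, ((n.factorization p + 1 : ℕ) : ℝ)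
        ≤ ∏ p ∈ n.primeFactors, (w p * (((p : ℝ) ^ (n.factorization p)) ^ δ)) := by
          apply Finset.prod_le_prod (fun p _ => by positivity) hfac
      _ = (∏ p ∈ n.primeFactors, w p) *
          ∏ p ∈ n.primeFactors, (((p : ℝ) ^ (n.factorization p)) ^ δ) := prod_mul_distrib
      _ = (∏ p ∈ n.primeFactors, w p) * ((n : ℝ) ^ δ) := by
          rw [Real.finset_prod_rpow _ _ (fun p _ => by positivity), hprodn]
  have hwprod : ∏ p ∈ n.primeFactors, w p ≤ c₀ ^ (B + 1) := by
    rw [← Finset.prod_filter_mul_prod_filter_not n.primeFactors (· ≤ B)]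
    have h2 : ∏ p ∈ n.primeFactors.filter (fun p => ¬ p ≤ B), w p = 1 :=
      Finset.prod_eq_one (fun p hp => if_neg (Finset.mem_filter.1 hp).2)
    have h1 : ∏ p ∈ n.primeFactors.filter (· ≤ B), w p
        = c₀ ^ (n.primeFactors.filter (· ≤ B)).card := by
      rw [Finset.prod_congr rfl (fun p hp => if_pos (Finset.mem_filter.1 hp).2)]
      exact Finset.prod_const c₀
    rw [h1, h2, mul_one]
    apply pow_le_pow_right₀ hc₀
    have : (n.primeFactors.filter (· ≤ B)) ⊆ Finset.range (B + 1) := by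
      intro p hp
      simp only [Finset.mem_range]
      have := (Finset.mem_filter.1 hp).2
      omega
    calc (n.primeFactors.filter (· ≤ B)).card ≤ (Finset.range (B + 1)).card :=
          Finset.card_le_card this
      _ = B + 1 := Finset.card_range _
  calc (n.divisors.card : ℝ) ≤ (∏ p ∈ n.primeFactors, w p) * ((n : ℝ) ^ δ) := step1
    _ ≤ c₀ ^ (B + 1) * (n : ℝ) ^ δ := by
        apply mul_le_mul_of_nonneg_right hwprod (by positivity)

lemma harmonic_bound (K : ℕ) : ∑ j ∈ Finset.Icc 1 K, (1 / (j : ℝ)) ≤ 1 + Real.log K := by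
  induction K with
  | zero => simp
  | succ K ih =>
    rcases Nat.eq_zero_or_pos K with hK | hK
    · subst hK; simp
    · rw [Finset.sum_Icc_succ_top (by omega)]
      have hlog : Real.log K + 1 / (K + 1 : ℝ) ≤ Real.log (K + 1 : ℕ) := by
        have hK0 : (0 : ℝ) < K := by exact_mod_cast hK
        have h1 : Real.log ((K : ℝ) / (K + 1)) ≤ (K : ℝ) / (K + 1) - 1 :=
          Real.log_le_sub_one_of_pos (by positivity)
        have h2 : Real.log ((K : ℝ) / (K + 1)) = Real.log K - Real.log (K + 1) :=
          Real.log_div (by positivity) (by positivity)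
        have h3 : (K : ℝ) / (K + 1) - 1 = - (1 / (K + 1 : ℝ)) := by field_simp; ring
        push_cast
        rw [h2, h3] at h1
        linarith [h1]
      push_cast at hlog ⊢
      linarith [ih]
set_option maxHeartbeats 1000000

open Finset

lemma core_bound (ε θ T δ C₀ : ℝ) (hε : 0 < ε) (hθ : 0 ≤ θ) (hT : 2 ≤ T)
    (hδ0 : 0 < δ) (hC₀ : 1 ≤ C₀)
    (hdiv : ∀ n : ℕ, 1 ≤ n → (n.divisors.card : ℝ) ≤ C₀ * (n : ℝ) ^ δ)
    (ψ : ℕ × ℕ × ℕ → ℕ × ℕ × ℕ → ℝ)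
    (hψ0 : ∀ u v, 0 ≤ ψ u v)
    (hψle : ∀ u v, ψ u v ≤ ((u.1 : ℝ) * u.2.1 * u.2.2)⁻¹)
    (hψ : ∀ u v, ψ u v ≠ 0 →
      (1 ≤ v.1 ∧ 1 ≤ v.2.1 ∧ 1 ≤ v.2.2) ∧
      v.1 * v.2.1 * v.2.2 ≠ u.1 * u.2.1 * u.2.2 ∧
      |((v.1 * v.2.1 * v.2.2 : ℕ) : ℝ) - ((u.1 * u.2.1 * u.2.2 : ℕ) : ℝ)| ≤ T ^ (θ + 3*ε/2)) :
    ∑ u ∈ (Finset.Icc 1 ⌈T ^ (θ+2+ε)⌉₊) ×ˢ ((Finset.Icc 1 ⌈T ^ (θ+2+ε)⌉₊) ×ˢ (Finset.Icc 1 ⌈T ^ (θ+2+ε)⌉₊)),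
      ∑ v ∈ (Finset.Icc 1 ⌈T ^ (θ+2+ε)⌉₊) ×ˢ ((Finset.Icc 1 ⌈T ^ (θ+2+ε)⌉₊) ×ˢ (Finset.Icc 1 ⌈T ^ (θ+2+ε)⌉₊)),
        ψ u v
    ≤ (1 + Real.log (T ^ (θ+3+ε)))^3 *
        (4 * T ^ (θ+3*ε/2) * (C₀ * (3 * T ^ (3*(θ+3+ε))) ^ δ)^2) := by
  classical
  have hT0 : (0:ℝ) < T := by linarith
  have hT1 : (1:ℝ) ≤ T := by linarith
  set K : ℕ := ⌈T ^ (θ+2+ε)⌉₊ with hKdef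
  set I : Finset ℕ := Finset.Icc 1 K with hIdef
  set S3 : Finset (ℕ × ℕ × ℕ) := I ×ˢ (I ×ˢ I) with hS3
  set H : ℝ := T ^ (θ + 3*ε/2) with hHdef
  have hH1 : (1:ℝ) ≤ H := Real.one_le_rpow hT1 (by positivity)
  set QB : ℝ := 3 * T ^ (3*(θ+3+ε)) with hQB
  have hTQB : T ^ (3*(θ+3+ε)) ≥ 1 := Real.one_le_rpow hT1 (by positivity)
  set E : ℝ := (C₀ * QB ^ δ)^2 with hE
  have hE0 : 0 ≤ E := sq_nonneg _
  set c : ℕ := ⌈H⌉₊ with hc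
  have hcH : (c:ℝ) ≤ 2 * H := by
    have := Nat.ceil_lt_add_one (show (0:ℝ) ≤ H by linarith)
    linarith
  have hHc : H ≤ (c:ℝ) := Nat.le_ceil _
  -- K is at most T^(θ+3+ε)
  have hKR : (K : ℝ) ≤ T ^ (θ+3+ε) := by
    have h1 : (K:ℝ) < T ^ (θ+2+ε) + 1 := Nat.ceil_lt_add_one (by positivity)
    have h2 : (1:ℝ) ≤ T ^ (θ+2+ε) := Real.one_le_rpow hT1 (by positivity)
    have h3 : T ^ (θ+3+ε) = T ^ (θ+2+ε) * T := by
      rw [show θ+3+ε = (θ+2+ε)+1 by ring, Real.rpow_add hT0, Real.rpow_one]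
    nlinarith
  have hK1 : 1 ≤ K := by
    rw [hKdef]
    rw [Nat.one_le_ceil_iff]
    positivity
  -- harmonic sum bound
  set L : ℝ := ∑ j ∈ I, ((j:ℝ))⁻¹ with hL
  have hL0 : 0 ≤ L := Finset.sum_nonneg fun j _ => by positivity
  have hLle : L ≤ 1 + Real.log (T ^ (θ+3+ε)) := by
    have h1 : L ≤ 1 + Real.log K := by
      have := harmonic_bound K
      simpa [hL, hIdef, one_div] using this
    have h2 : Real.log K ≤ Real.log (T ^ (θ+3+ε)) := by
      apply Real.log_le_log (by exact_mod_cast hK1) hKR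
    linarith
  have hlog0 : 0 ≤ 1 + Real.log (T ^ (θ+3+ε)) := le_trans hL0 hLle
  -- inner sum bound for each u
  have hinner : ∀ u ∈ S3, ∑ v ∈ S3, ψ u v ≤ ((u.1:ℝ) * u.2.1 * u.2.2)⁻¹ * (4 * H * E) := by
    rintro ⟨a, m₁, m₂⟩ hu
    simp only [hS3, Finset.mem_product, hIdef, Finset.mem_Icc] at hu
    obtain ⟨⟨ha1, haK⟩, ⟨hm11, hm1K⟩, ⟨hm21, hm2K⟩⟩ := hu
    set P : ℕ := a * m₁ * m₂ with hPdef
    have hP1 : 1 ≤ P := Nat.mul_pos (Nat.mul_pos ha1 hm11) hm21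
    have hPle : (P:ℝ) ≤ T ^ (3*(θ+3+ε)) := by
      have e : T ^ (3*(θ+3+ε)) = (T ^ (θ+3+ε)) * (T ^ (θ+3+ε)) * (T ^ (θ+3+ε)) := by
        rw [← Real.rpow_add hT0, ← Real.rpow_add hT0]
        ring_nf
      have ha' : (a:ℝ) ≤ T ^ (θ+3+ε) := le_trans (by exact_mod_cast haK) hKR
      have hm1' : (m₁:ℝ) ≤ T ^ (θ+3+ε) := le_trans (by exact_mod_cast hm1K) hKR
      have hm2' : (m₂:ℝ) ≤ T ^ (θ+3+ε) := le_trans (by exact_mod_cast hm2K) hKR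
      have hp : (P:ℝ) = (a:ℝ) * m₁ * m₂ := by push_cast [hPdef]; ring
      rw [e, hp]
      gcongr <;> positivity
    set W : Finset ℕ := (Finset.Icc (P - c) (P + c)).erase P with hW
    have hWcard : W.card ≤ 2 * c := by
      have h1 : W.card = (Finset.Icc (P - c) (P + c)).card - 1 :=
        Finset.card_erase_of_mem (Finset.mem_Icc.2 (by omega))
      rw [h1, Nat.card_Icc]
      omega
    -- every Q in W is at most QB and d(Q)^2 ≤ E
    have hQE : ∀ Q ∈ W, ((Q.divisors.card : ℝ))^2 ≤ E := by
      intro Q hQ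
      rcases Nat.eq_zero_or_pos Q with h0 | h0
      · subst h0; simpa using hE0
      · have hQle : (Q:ℝ) ≤ QB := by
          have h1 : Q ≤ P + c := (Finset.mem_Icc.1 (Finset.mem_of_mem_erase hQ)).2
          have h2 : (Q:ℝ) ≤ (P:ℝ) + c := by exact_mod_cast h1
          have h3 : H ≤ T ^ (3*(θ+3+ε)) := by
            apply Real.rpow_le_rpow_of_exponent_le hT1
            nlinarith
          rw [hQB]
          nlinarith
        have hd : (Q.divisors.card : ℝ) ≤ C₀ * QB ^ δ := by
          calc (Q.divisors.card : ℝ) ≤ C₀ * (Q:ℝ) ^ δ := hdiv Q h0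
            _ ≤ C₀ * QB ^ δ := by
                apply mul_le_mul_of_nonneg_left _ (by linarith)
                exact Real.rpow_le_rpow (by positivity) hQle hδ0.le
        rw [hE]
        apply pow_le_pow_left₀ (by positivity) hd
    -- count admissible v
    have hcount : ((S3.filter (fun v => ψ (a, m₁, m₂) v ≠ 0)).card : ℝ) ≤ 4 * H * E := by
      set t : Finset (ℕ × ℕ × ℕ) := W.biUnion (fun Q => {Q} ×ˢ (Q.divisors ×ˢ Q.divisors)) with ht
      have hmaps : ∀ v ∈ S3.filter (fun v => ψ (a, m₁, m₂) v ≠ 0),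
          (v.1 * v.2.1 * v.2.2, v.1, v.2.1) ∈ t := by
        intro v hv
        have hv' := (Finset.mem_filter.1 hv).2
        obtain ⟨⟨hv1, hv21, hv22⟩, hne, habs⟩ := hψ _ _ hv'
        set Q : ℕ := v.1 * v.2.1 * v.2.2 with hQdef
        have hQ1 : 1 ≤ Q := Nat.mul_pos (Nat.mul_pos hv1 hv21) hv22
        have hQW : Q ∈ W := by
          have h1 : (Q:ℝ) ≤ (P:ℝ) + c := by
            have := abs_le.1 habs
            push_cast
            rw [hPdef]
            push_cast at this ⊢
            linarith [this.2, hHc]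
          have h2 : (P:ℝ) ≤ (Q:ℝ) + c := by
            have := abs_le.1 habs
            push_cast
            rw [hPdef]
            push_cast at this ⊢
            linarith [this.1, hHc]
          have h1' : Q ≤ P + c := by exact_mod_cast h1
          have h2' : P ≤ Q + c := by exact_mod_cast h2
          rw [hW]
          apply Finset.mem_erase.2 ⟨by rw [hQdef, hPdef]; exact hne, ?_⟩
          simp only [Finset.mem_Icc]
          omega
        apply Finset.mem_biUnion.2
        refine ⟨Q, hQW, ?_⟩
        refine Finset.mem_product.2 ⟨Finset.mem_singleton_self Q, Finset.mem_product.2 ⟨?_, ?_⟩⟩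
        · exact Nat.mem_divisors.2 ⟨⟨v.2.1 * v.2.2, by rw [hQdef]; ring⟩, by omega⟩
        · exact Nat.mem_divisors.2 ⟨⟨v.1 * v.2.2, by rw [hQdef]; ring⟩, by omega⟩
      have hinj : Set.InjOn (fun v : ℕ × ℕ × ℕ => (v.1 * v.2.1 * v.2.2, v.1, v.2.1))
          (S3.filter (fun v => ψ (a, m₁, m₂) v ≠ 0)) := by
        intro v hv v' hv' heq
        have hv2 := (Finset.mem_filter.1 hv).2
        obtain ⟨⟨hv1, hv21, _⟩, _, _⟩ := hψ _ _ hv2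
        simp only [Prod.mk.injEq] at heq
        obtain ⟨hQ, h1, h2⟩ := heq
        have h3 : v.2.2 = v'.2.2 := by
          rw [← h1, ← h2] at hQ
          have hpos : 0 < v.1 * v.2.1 := by positivity
          exact Nat.eq_of_mul_eq_mul_left hpos (by linarith [hQ])
        exact Prod.ext h1 (Prod.ext h2 h3)
      have hcard1 : (S3.filter (fun v => ψ (a, m₁, m₂) v ≠ 0)).card ≤ t.card :=
        Finset.card_le_card_of_injOn _ hmaps hinj
      have hcard2 : (t.card : ℝ) ≤ ∑ Q ∈ W, ((Q.divisors.card : ℝ))^2 := by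
        have h1 : t.card ≤ ∑ Q ∈ W, ({Q} ×ˢ (Q.divisors ×ˢ Q.divisors)).card :=
          Finset.card_biUnion_le
        have h2 : ∀ Q : ℕ, ({Q} ×ˢ (Q.divisors ×ˢ Q.divisors)).card = Q.divisors.card ^ 2 := by
          intro Q
          simp [Finset.card_product, sq]
        calc (t.card : ℝ) ≤ ((∑ Q ∈ W, ({Q} ×ˢ (Q.divisors ×ˢ Q.divisors)).card : ℕ) : ℝ) := by
              exact_mod_cast h1
          _ = ∑ Q ∈ W, ((Q.divisors.card : ℝ))^2 := by
              push_cast [h2]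
              rfl
      have hcard3 : ∑ Q ∈ W, ((Q.divisors.card : ℝ))^2 ≤ (W.card : ℝ) * E := by
        calc ∑ Q ∈ W, ((Q.divisors.card : ℝ))^2 ≤ ∑ _Q ∈ W, E := Finset.sum_le_sum hQE
          _ = (W.card : ℝ) * E := by rw [Finset.sum_const, nsmul_eq_mul]
      have hWr : (W.card : ℝ) ≤ 4 * H := by
        have : (W.card : ℝ) ≤ 2 * (c:ℝ) := by exact_mod_cast hWcard
        nlinarith
      calc ((S3.filter (fun v => ψ (a, m₁, m₂) v ≠ 0)).card : ℝ) ≤ (t.card : ℝ) := by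
            exact_mod_cast hcard1
        _ ≤ ∑ Q ∈ W, ((Q.divisors.card : ℝ))^2 := hcard2
        _ ≤ (W.card : ℝ) * E := hcard3
        _ ≤ 4 * H * E := by nlinarith
    -- now the inner sum
    have hfilter : ∑ v ∈ S3, ψ (a, m₁, m₂) v
        = ∑ v ∈ S3.filter (fun v => ψ (a, m₁, m₂) v ≠ 0), ψ (a, m₁, m₂) v :=
      (Finset.sum_filter_of_ne (fun v _ h => h)).symm
    rw [hfilter]
    have hle1 : ∑ v ∈ S3.filter (fun v => ψ (a, m₁, m₂) v ≠ 0), ψ (a, m₁, m₂) v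
        ≤ ((S3.filter (fun v => ψ (a, m₁, m₂) v ≠ 0)).card : ℝ) * (((a:ℝ) * m₁ * m₂)⁻¹) := by
      have := Finset.sum_le_card_nsmul (S3.filter (fun v => ψ (a, m₁, m₂) v ≠ 0))
        (ψ (a, m₁, m₂)) (((a:ℝ) * m₁ * m₂)⁻¹) (fun v _ => hψle (a, m₁, m₂) v)
      simpa [nsmul_eq_mul] using this
    have hinv0 : (0:ℝ) ≤ ((a:ℝ) * m₁ * m₂)⁻¹ := by positivity
    calc ∑ v ∈ S3.filter (fun v => ψ (a, m₁, m₂) v ≠ 0), ψ (a, m₁, m₂) v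
        ≤ ((S3.filter (fun v => ψ (a, m₁, m₂) v ≠ 0)).card : ℝ) * (((a:ℝ) * m₁ * m₂)⁻¹) := hle1
      _ ≤ (4 * H * E) * (((a:ℝ) * m₁ * m₂)⁻¹) := by
          apply mul_le_mul_of_nonneg_right hcount hinv0
      _ = (((a:ℝ) * m₁ * m₂))⁻¹ * (4 * H * E) := by ring
  -- sum over u
  have hsum : ∑ u ∈ S3, ∑ v ∈ S3, ψ u v ≤ (∑ u ∈ S3, ((u.1:ℝ) * u.2.1 * u.2.2)⁻¹) * (4 * H * E) := by
    rw [Finset.sum_mul]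
    exact Finset.sum_le_sum hinner
  have hcube : ∑ u ∈ S3, ((u.1:ℝ) * u.2.1 * u.2.2)⁻¹ = L^3 := by
    rw [hS3, Finset.sum_product]
    simp only [Finset.sum_product]
    calc ∑ a ∈ I, ∑ b ∈ I, ∑ cc ∈ I, (((a:ℝ)) * ((b:ℕ):ℝ) * ((cc:ℕ):ℝ))⁻¹
        = ∑ a ∈ I, ∑ b ∈ I, ∑ cc ∈ I, ((a:ℝ)⁻¹ * (b:ℝ)⁻¹) * (cc:ℝ)⁻¹ := by
          refine Finset.sum_congr rfl fun a _ => Finset.sum_congr rfl fun b _ =>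
            Finset.sum_congr rfl fun cc _ => ?_
          rw [mul_inv, mul_inv]
      _ = ∑ a ∈ I, ∑ b ∈ I, ((a:ℝ)⁻¹ * (b:ℝ)⁻¹) * L := by
          refine Finset.sum_congr rfl fun a _ => Finset.sum_congr rfl fun b _ => ?_
          rw [hL, Finset.mul_sum]
      _ = (∑ a ∈ I, ∑ b ∈ I, (a:ℝ)⁻¹ * (b:ℝ)⁻¹) * L := by
          rw [Finset.sum_mul]
          exact Finset.sum_congr rfl fun a _ => (Finset.sum_mul _ _ _).symm
      _ = (L * L) * L := by rw [← Finset.sum_mul_sum]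
      _ = L^3 := by ring
  have hfinal : L^3 * (4 * H * E) ≤ (1 + Real.log (T ^ (θ+3+ε)))^3 * (4 * H * E) := by
    apply mul_le_mul_of_nonneg_right _ (by positivity)
    exact pow_le_pow_left₀ hL0 hLle 3
  calc ∑ u ∈ S3, ∑ v ∈ S3, ψ u v ≤ (∑ u ∈ S3, ((u.1:ℝ) * u.2.1 * u.2.2)⁻¹) * (4 * H * E) := hsum
    _ = L^3 * (4 * H * E) := by rw [hcube]
    _ ≤ _ := hfinal

open Finset

lemma tsum6_collapse (f : ℕ → ℕ → ℕ → ℕ → ℕ → ℕ → ℝ) (I : Finset ℕ)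
    (h : ∀ a b m₁ m₂ n₁ n₂, f a b m₁ m₂ n₁ n₂ ≠ 0 →
      a ∈ I ∧ b ∈ I ∧ m₁ ∈ I ∧ m₂ ∈ I ∧ n₁ ∈ I ∧ n₂ ∈ I) :
    (∑' a, ∑' b, ∑' m₁, ∑' m₂, ∑' n₁, ∑' n₂, f a b m₁ m₂ n₁ n₂)
      = ∑ a ∈ I, ∑ b ∈ I, ∑ m₁ ∈ I, ∑ m₂ ∈ I, ∑ n₁ ∈ I, ∑ n₂ ∈ I, f a b m₁ m₂ n₁ n₂ := by
  have h0 : ∀ a b m₁ m₂ n₁ n₂, ¬(a ∈ I ∧ b ∈ I ∧ m₁ ∈ I ∧ m₂ ∈ I ∧ n₁ ∈ I ∧ n₂ ∈ I) →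
      f a b m₁ m₂ n₁ n₂ = 0 := by
    intro a b m₁ m₂ n₁ n₂ hn
    by_contra hne
    exact hn (h _ _ _ _ _ _ hne)
  have e6 : ∀ a b m₁ m₂ n₁, (∑' n₂, f a b m₁ m₂ n₁ n₂) = ∑ n₂ ∈ I, f a b m₁ m₂ n₁ n₂ :=
    fun a b m₁ m₂ n₁ => tsum_eq_sum (fun n₂ hn => h0 _ _ _ _ _ _ (fun hc => hn hc.2.2.2.2.2))
  have e5 : ∀ a b m₁ m₂, (∑' n₁, ∑' n₂, f a b m₁ m₂ n₁ n₂)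
      = ∑ n₁ ∈ I, ∑ n₂ ∈ I, f a b m₁ m₂ n₁ n₂ := by
    intro a b m₁ m₂
    rw [tsum_congr (fun n₁ => e6 a b m₁ m₂ n₁)]
    exact tsum_eq_sum (fun n₁ hn => Finset.sum_eq_zero
      (fun n₂ _ => h0 _ _ _ _ _ _ (fun hc => hn hc.2.2.2.2.1)))
  have e4 : ∀ a b m₁, (∑' m₂, ∑' n₁, ∑' n₂, f a b m₁ m₂ n₁ n₂)
      = ∑ m₂ ∈ I, ∑ n₁ ∈ I, ∑ n₂ ∈ I, f a b m₁ m₂ n₁ n₂ := by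
    intro a b m₁
    rw [tsum_congr (fun m₂ => e5 a b m₁ m₂)]
    exact tsum_eq_sum (fun m₂ hn => Finset.sum_eq_zero (fun n₁ _ => Finset.sum_eq_zero
      (fun n₂ _ => h0 _ _ _ _ _ _ (fun hc => hn hc.2.2.2.1))))
  have e3 : ∀ a b, (∑' m₁, ∑' m₂, ∑' n₁, ∑' n₂, f a b m₁ m₂ n₁ n₂)
      = ∑ m₁ ∈ I, ∑ m₂ ∈ I, ∑ n₁ ∈ I, ∑ n₂ ∈ I, f a b m₁ m₂ n₁ n₂ := by
    intro a b
    rw [tsum_congr (fun m₁ => e4 a b m₁)]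
    exact tsum_eq_sum (fun m₁ hn => Finset.sum_eq_zero (fun m₂ _ => Finset.sum_eq_zero
      (fun n₁ _ => Finset.sum_eq_zero (fun n₂ _ => h0 _ _ _ _ _ _ (fun hc => hn hc.2.2.1)))))
  have e2 : ∀ a, (∑' b, ∑' m₁, ∑' m₂, ∑' n₁, ∑' n₂, f a b m₁ m₂ n₁ n₂)
      = ∑ b ∈ I, ∑ m₁ ∈ I, ∑ m₂ ∈ I, ∑ n₁ ∈ I, ∑ n₂ ∈ I, f a b m₁ m₂ n₁ n₂ := by
    intro a
    rw [tsum_congr (fun b => e3 a b)]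
    exact tsum_eq_sum (fun b hn => Finset.sum_eq_zero (fun m₁ _ => Finset.sum_eq_zero
      (fun m₂ _ => Finset.sum_eq_zero (fun n₁ _ => Finset.sum_eq_zero
        (fun n₂ _ => h0 _ _ _ _ _ _ (fun hc => hn hc.2.1))))))
  rw [tsum_congr (fun a => e2 a)]
  exact tsum_eq_sum (fun a hn => Finset.sum_eq_zero (fun b _ => Finset.sum_eq_zero
    (fun m₁ _ => Finset.sum_eq_zero (fun m₂ _ => Finset.sum_eq_zero
      (fun n₁ _ => Finset.sum_eq_zero (fun n₂ _ => h0 _ _ _ _ _ _ (fun hc => hn hc.1)))))))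

lemma sum6_nested_to_flat (f : ℕ → ℕ → ℕ → ℕ → ℕ → ℕ → ℝ) (I : Finset ℕ) :
    ∑ x ∈ I ×ˢ (I ×ˢ (I ×ˢ (I ×ˢ (I ×ˢ I)))),
        f x.1 x.2.1 x.2.2.1 x.2.2.2.1 x.2.2.2.2.1 x.2.2.2.2.2
      = ∑ a ∈ I, ∑ b ∈ I, ∑ m₁ ∈ I, ∑ m₂ ∈ I, ∑ n₁ ∈ I, ∑ n₂ ∈ I, f a b m₁ m₂ n₁ n₂ := by
  simp only [Finset.sum_product]

lemma flat_to_uv (g : (ℕ×ℕ×ℕ) → (ℕ×ℕ×ℕ) → ℝ) (I : Finset ℕ) :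
    ∑ x ∈ I ×ˢ (I ×ˢ (I ×ˢ (I ×ˢ (I ×ˢ I)))),
        g (x.1, x.2.2.1, x.2.2.2.1) (x.2.1, x.2.2.2.2.1, x.2.2.2.2.2)
      = ∑ u ∈ I ×ˢ (I ×ˢ I), ∑ v ∈ I ×ˢ (I ×ˢ I), g u v := by
  have h2 : ∑ w ∈ (I ×ˢ (I ×ˢ I)) ×ˢ (I ×ˢ (I ×ˢ I)), g w.1 w.2
      = ∑ u ∈ I ×ˢ (I ×ˢ I), ∑ v ∈ I ×ˢ (I ×ˢ I), g u v := Finset.sum_product _ _ (fun w => g w.1 w.2)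
  rw [← h2]
  refine Finset.sum_nbij' (fun x => ((x.1, x.2.2.1, x.2.2.2.1), (x.2.1, x.2.2.2.2.1, x.2.2.2.2.2)))
    (fun w => (w.1.1, (w.2.1, (w.1.2.1, (w.1.2.2, (w.2.2.1, w.2.2.2)))))) ?_ ?_ ?_ ?_ ?_
  · rintro ⟨a,b,m₁,m₂,n₁,n₂⟩ hx
    simp only [Finset.mem_product] at hx ⊢
    tauto
  · rintro ⟨⟨a,m₁,m₂⟩,⟨b,n₁,n₂⟩⟩ hw
    simp only [Finset.mem_product] at hw ⊢
    tauto
  · rintro ⟨a,b,m₁,m₂,n₁,n₂⟩ _; rfl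
  · rintro ⟨⟨a,m₁,m₂⟩,⟨b,n₁,n₂⟩⟩ _; rfl
  · rintro ⟨a,b,m₁,m₂,n₁,n₂⟩ _; rfl

lemma flat_to_uv' (g : (ℕ×ℕ×ℕ) → (ℕ×ℕ×ℕ) → ℝ) (I : Finset ℕ) :
    ∑ x ∈ I ×ˢ (I ×ˢ (I ×ˢ (I ×ˢ (I ×ˢ I)))),
        g (x.2.1, x.2.2.2.2.1, x.2.2.2.2.2) (x.1, x.2.2.1, x.2.2.2.1)
      = ∑ u ∈ I ×ˢ (I ×ˢ I), ∑ v ∈ I ×ˢ (I ×ˢ I), g u v := by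
  have h2 : ∑ w ∈ (I ×ˢ (I ×ˢ I)) ×ˢ (I ×ˢ (I ×ˢ I)), g w.1 w.2
      = ∑ u ∈ I ×ˢ (I ×ˢ I), ∑ v ∈ I ×ˢ (I ×ˢ I), g u v := Finset.sum_product _ _ (fun w => g w.1 w.2)
  rw [← h2]
  refine Finset.sum_nbij' (fun x => ((x.2.1, x.2.2.2.2.1, x.2.2.2.2.2), (x.1, x.2.2.1, x.2.2.2.1)))
    (fun w => (w.2.1, (w.1.1, (w.2.2.1, (w.2.2.2, (w.1.2.1, w.1.2.2)))))) ?_ ?_ ?_ ?_ ?_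
  · rintro ⟨a,b,m₁,m₂,n₁,n₂⟩ hx
    simp only [Finset.mem_product] at hx ⊢
    tauto
  · rintro ⟨⟨b,n₁,n₂⟩,⟨a,m₁,m₂⟩⟩ hw
    simp only [Finset.mem_product] at hw ⊢
    tauto
  · rintro ⟨a,b,m₁,m₂,n₁,n₂⟩ _; rfl
  · rintro ⟨⟨b,n₁,n₂⟩,⟨a,m₁,m₂⟩⟩ _; rfl
  · rintro ⟨a,b,m₁,m₂,n₁,n₂⟩ _; rfl

lemma inv_bound (a b m₁ m₂ n₁ n₂ : ℕ) (ha : 1 ≤ a) (hb : 1 ≤ b) (hm₁ : 1 ≤ m₁)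
    (hm₂ : 1 ≤ m₂) (hn₁ : 1 ≤ n₁) (hn₂ : 1 ≤ n₂) :
    ((a * b * m₁ * m₂ * n₁ * n₂ : ℕ) : ℝ) ^ (-(1:ℝ)/2)
      ≤ ((a:ℝ) * m₁ * m₂)⁻¹ + ((b:ℝ) * n₁ * n₂)⁻¹ := by
  have ha' : (1:ℝ) ≤ a := by exact_mod_cast ha
  have hb' : (1:ℝ) ≤ b := by exact_mod_cast hb
  have hm₁' : (1:ℝ) ≤ m₁ := by exact_mod_cast hm₁
  have hm₂' : (1:ℝ) ≤ m₂ := by exact_mod_cast hm₂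
  have hn₁' : (1:ℝ) ≤ n₁ := by exact_mod_cast hn₁
  have hn₂' : (1:ℝ) ≤ n₂ := by exact_mod_cast hn₂
  set P : ℝ := (a:ℝ) * m₁ * m₂ with hPdef
  set Q : ℝ := (b:ℝ) * n₁ * n₂ with hQdef
  have hP1 : 1 ≤ P := by
    rw [hPdef]
    have h1 : (1:ℝ)*1 ≤ (a:ℝ)*m₁ := mul_le_mul ha' hm₁' zero_le_one (by linarith)
    have h2 : (1:ℝ)*1 ≤ ((a:ℝ)*m₁)*m₂ := mul_le_mul (by linarith) hm₂' zero_le_one (by linarith)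
    linarith
  have hQ1 : 1 ≤ Q := by
    rw [hQdef]
    have h1 : (1:ℝ)*1 ≤ (b:ℝ)*n₁ := mul_le_mul hb' hn₁' zero_le_one (by linarith)
    have h2 : (1:ℝ)*1 ≤ ((b:ℝ)*n₁)*n₂ := mul_le_mul (by linarith) hn₂' zero_le_one (by linarith)
    linarith
  have hcast : ((a * b * m₁ * m₂ * n₁ * n₂ : ℕ) : ℝ) = P * Q := by
    rw [hPdef, hQdef]; push_cast; ring
  rw [hcast, show (-(1:ℝ)/2) = -(1/2) by norm_num, Real.rpow_neg (by positivity),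
    ← Real.sqrt_eq_rpow]
  rcases le_total P Q with hle | hle
  · have h1 : P ≤ Real.sqrt (P * Q) := by
      have h2 : Real.sqrt (P * P) ≤ Real.sqrt (P * Q) := Real.sqrt_le_sqrt (by nlinarith)
      rwa [Real.sqrt_mul_self (by linarith)] at h2
    have h3 : (Real.sqrt (P * Q))⁻¹ ≤ P⁻¹ := by
      apply inv_anti₀ (by linarith) h1
    have h4 : (0:ℝ) ≤ Q⁻¹ := by positivity
    linarith
  · have h1 : Q ≤ Real.sqrt (P * Q) := by
      have h2 : Real.sqrt (Q * Q) ≤ Real.sqrt (P * Q) := Real.sqrt_le_sqrt (by nlinarith)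
      rwa [Real.sqrt_mul_self (by linarith)] at h2
    have h3 : (Real.sqrt (P * Q))⁻¹ ≤ Q⁻¹ := by
      apply inv_anti₀ (by linarith) h1
    have h4 : (0:ℝ) ≤ P⁻¹ := by positivity
    linarith

lemma abs_key (ε θ T : ℝ) (hε : 0 < ε) (hθ : 0 ≤ θ) (hT : 2 ≤ T) (a b m₁ m₂ n₁ n₂ : ℕ)
    (ha : (a:ℝ) ≤ T ^ θ) (hb : (b:ℝ) ≤ T ^ θ)
    (hm : ((m₁ * m₂ * n₁ * n₂ : ℕ) : ℝ) ≤ T ^ (2 + ε))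
    (habs : ((|(a * m₁ * m₂ : ℤ) - (b * n₁ * n₂ : ℤ)| : ℤ) : ℝ) ≤
      Real.sqrt ((a * b * m₁ * m₂ * n₁ * n₂ : ℕ) : ℝ) * T ^ (-1 + ε)) :
    |((b * n₁ * n₂ : ℕ) : ℝ) - ((a * m₁ * m₂ : ℕ) : ℝ)| ≤ T ^ (θ + 3 * ε / 2) := by
  have hT0 : (0:ℝ) < T := by linarith
  have hT1 : (1:ℝ) ≤ T := by linarith
  have h1 : ((a * b * m₁ * m₂ * n₁ * n₂ : ℕ) : ℝ) ≤ T ^ (2 * θ + 2 + ε) := by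
    have e : ((a * b * m₁ * m₂ * n₁ * n₂ : ℕ) : ℝ)
        = ((a:ℝ) * b) * ((m₁ * m₂ * n₁ * n₂ : ℕ) : ℝ) := by push_cast; ring
    have h2 : (a:ℝ) * b ≤ T ^ θ * T ^ θ :=
      mul_le_mul ha hb (by positivity) (by positivity)
    have h3 : ((a:ℝ) * b) * ((m₁ * m₂ * n₁ * n₂ : ℕ) : ℝ) ≤ (T ^ θ * T ^ θ) * T ^ (2 + ε) :=
      mul_le_mul h2 hm (by positivity) (by positivity)
    rw [e]
    calc ((a:ℝ) * b) * ((m₁ * m₂ * n₁ * n₂ : ℕ) : ℝ) ≤ (T ^ θ * T ^ θ) * T ^ (2 + ε) := h3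
      _ = T ^ (2 * θ + 2 + ε) := by
          rw [← Real.rpow_add hT0, ← Real.rpow_add hT0]; ring_nf
  have h2 : Real.sqrt ((a * b * m₁ * m₂ * n₁ * n₂ : ℕ) : ℝ) ≤ T ^ (θ + 1 + ε / 2) := by
    have h3 : Real.sqrt ((a * b * m₁ * m₂ * n₁ * n₂ : ℕ) : ℝ)
        ≤ Real.sqrt (T ^ (2 * θ + 2 + ε)) := Real.sqrt_le_sqrt h1
    have h4 : Real.sqrt (T ^ (2 * θ + 2 + ε)) = T ^ (θ + 1 + ε / 2) := by
      rw [Real.sqrt_eq_rpow, ← Real.rpow_mul hT0.le]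
      norm_num
      ring_nf
    rwa [h4] at h3
  have h5 : Real.sqrt ((a * b * m₁ * m₂ * n₁ * n₂ : ℕ) : ℝ) * T ^ (-1 + ε)
      ≤ T ^ (θ + 3 * ε / 2) := by
    calc Real.sqrt ((a * b * m₁ * m₂ * n₁ * n₂ : ℕ) : ℝ) * T ^ (-1 + ε)
        ≤ T ^ (θ + 1 + ε / 2) * T ^ (-1 + ε) := by
          apply mul_le_mul_of_nonneg_right h2 (by positivity)
      _ = T ^ (θ + 3 * ε / 2) := by rw [← Real.rpow_add hT0]; ring_nf
  have h6 : |((a * m₁ * m₂ : ℕ) : ℝ) - ((b * n₁ * n₂ : ℕ) : ℝ)| ≤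
      Real.sqrt ((a * b * m₁ * m₂ * n₁ * n₂ : ℕ) : ℝ) * T ^ (-1 + ε) := by
    have e : ((|(a * m₁ * m₂ : ℤ) - (b * n₁ * n₂ : ℤ)| : ℤ) : ℝ)
        = |((a * m₁ * m₂ : ℕ) : ℝ) - ((b * n₁ * n₂ : ℕ) : ℝ)| := by
      push_cast
      ring_nf
    rwa [e] at habs
  rw [abs_sub_comm]
  exact le_trans h6 h5


/-- the trivial bound for the off-diagonal count.  For every
`ε > 0` and `θ ≥ 0` there is a constant `C` such that for all `T ≥ 2`,
`∑_{a,b ≤ T^θ} ∑ (a b m₁ m₂ n₁ n₂)^{−1/2} ≤ C T^{θ+2ε}`, the inner sum running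
over positive integers `m₁,m₂,n₁,n₂` with `m₁m₂n₁n₂ ≤ T^{2+ε}`,
`h := a m₁ m₂ − b n₁ n₂ ≠ 0` and `|h| ≤ √(a b m₁ m₂ n₁ n₂) T^{−1+ε}`. -/
theorem stmt_19 (ε θ : ℝ) (hε : 0 < ε) (hθ : 0 ≤ θ) :
    ∃ C : ℝ, ∀ T : ℝ, 2 ≤ T →
      (∑' a : ℕ, ∑' b : ℕ, ∑' m₁ : ℕ, ∑' m₂ : ℕ, ∑' n₁ : ℕ, ∑' n₂ : ℕ,
        if 1 ≤ a ∧ 1 ≤ b ∧ 1 ≤ m₁ ∧ 1 ≤ m₂ ∧ 1 ≤ n₁ ∧ 1 ≤ n₂ ∧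
            (a : ℝ) ≤ T ^ θ ∧ (b : ℝ) ≤ T ^ θ ∧
            ((m₁ * m₂ * n₁ * n₂ : ℕ) : ℝ) ≤ T ^ (2 + ε) ∧
            (a * m₁ * m₂ : ℤ) ≠ (b * n₁ * n₂ : ℤ) ∧
            ((|(a * m₁ * m₂ : ℤ) - (b * n₁ * n₂ : ℤ)| : ℤ) : ℝ) ≤
              Real.sqrt ((a * b * m₁ * m₂ * n₁ * n₂ : ℕ) : ℝ) * T ^ (-1 + ε)
        then ((a * b * m₁ * m₂ * n₁ * n₂ : ℕ) : ℝ) ^ (-(1 : ℝ) / 2) else 0)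
      ≤ C * T ^ (θ + 2 * ε) := by
  classical
  have hden : (0:ℝ) < 24 * (θ + 3 + ε) := by linarith
  set δ : ℝ := ε / (24 * (θ + 3 + ε)) with hδdef
  have hδ0 : 0 < δ := by positivity
  have hδ1 : δ ≤ 1 := by rw [hδdef, div_le_one hden]; linarith
  obtain ⟨C₀, hC₀, hdiv⟩ := div_bound δ hδ0
  set γ : ℝ := ε / 72 with hγdef
  have hγ0 : 0 < γ := by positivity
  set c₁ : ℝ := 1 + (θ + 3 + ε) / γ with hc₁def
  have hc₁1 : 1 ≤ c₁ := by
    have : 0 ≤ (θ + 3 + ε) / γ := by positivity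
    rw [hc₁def]; linarith
  have hc₁0 : 0 ≤ c₁ := by linarith
  refine ⟨72 * c₁ ^ 3 * C₀ ^ 2, ?_⟩
  intro T hT
  have hT0 : (0:ℝ) < T := by linarith
  have hT1 : (1:ℝ) ≤ T := by linarith
  set K : ℕ := ⌈T ^ (θ + 2 + ε)⌉₊ with hKdef
  set I : Finset ℕ := Finset.Icc 1 K with hIdef
  set F : ℕ → ℕ → ℕ → ℕ → ℕ → ℕ → ℝ := fun a b m₁ m₂ n₁ n₂ =>
    if 1 ≤ a ∧ 1 ≤ b ∧ 1 ≤ m₁ ∧ 1 ≤ m₂ ∧ 1 ≤ n₁ ∧ 1 ≤ n₂ ∧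
        (a : ℝ) ≤ T ^ θ ∧ (b : ℝ) ≤ T ^ θ ∧
        ((m₁ * m₂ * n₁ * n₂ : ℕ) : ℝ) ≤ T ^ (2 + ε) ∧
        (a * m₁ * m₂ : ℤ) ≠ (b * n₁ * n₂ : ℤ) ∧
        ((|(a * m₁ * m₂ : ℤ) - (b * n₁ * n₂ : ℤ)| : ℤ) : ℝ) ≤
          Real.sqrt ((a * b * m₁ * m₂ * n₁ * n₂ : ℕ) : ℝ) * T ^ (-1 + ε)
    then ((a * b * m₁ * m₂ * n₁ * n₂ : ℕ) : ℝ) ^ (-(1 : ℝ) / 2) else 0 with hF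
  -- membership
  have hmem : ∀ a b m₁ m₂ n₁ n₂ : ℕ,
      (1 ≤ a ∧ 1 ≤ b ∧ 1 ≤ m₁ ∧ 1 ≤ m₂ ∧ 1 ≤ n₁ ∧ 1 ≤ n₂ ∧
        (a : ℝ) ≤ T ^ θ ∧ (b : ℝ) ≤ T ^ θ ∧
        ((m₁ * m₂ * n₁ * n₂ : ℕ) : ℝ) ≤ T ^ (2 + ε) ∧
        (a * m₁ * m₂ : ℤ) ≠ (b * n₁ * n₂ : ℤ) ∧
        ((|(a * m₁ * m₂ : ℤ) - (b * n₁ * n₂ : ℤ)| : ℤ) : ℝ) ≤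
          Real.sqrt ((a * b * m₁ * m₂ * n₁ * n₂ : ℕ) : ℝ) * T ^ (-1 + ε)) →
      a ∈ I ∧ b ∈ I ∧ m₁ ∈ I ∧ m₂ ∈ I ∧ n₁ ∈ I ∧ n₂ ∈ I := by
    rintro a b m₁ m₂ n₁ n₂ ⟨h1, h2, h3, h4, h5, h6, h7, h8, h9, -, -⟩
    have hKc : T ^ (θ + 2 + ε) ≤ (K:ℝ) := Nat.le_ceil _
    have hab : ∀ x : ℕ, (x:ℝ) ≤ T ^ θ → x ≤ K := by
      intro x hx
      have : (x:ℝ) ≤ (K:ℝ) := le_trans hx (le_trans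
        (Real.rpow_le_rpow_of_exponent_le hT1 (by linarith)) hKc)
      exact_mod_cast this
    have hprod : ((m₁ * m₂ * n₁ * n₂ : ℕ):ℝ) ≤ (K:ℝ) := le_trans h9 (le_trans
      (Real.rpow_le_rpow_of_exponent_le hT1 (by linarith)) hKc)
    have hPK : m₁ * m₂ * n₁ * n₂ ≤ K := by exact_mod_cast hprod
    have hm₁K : m₁ ≤ K := le_trans (by calc m₁ = m₁ * 1 * 1 * 1 := by ring
      _ ≤ m₁ * m₂ * n₁ * n₂ :=
        Nat.mul_le_mul (Nat.mul_le_mul (Nat.mul_le_mul (le_refl m₁) h4) h5) h6) hPK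
    have hm₂K : m₂ ≤ K := le_trans (by calc m₂ = 1 * m₂ * 1 * 1 := by ring
      _ ≤ m₁ * m₂ * n₁ * n₂ :=
        Nat.mul_le_mul (Nat.mul_le_mul (Nat.mul_le_mul h3 (le_refl m₂)) h5) h6) hPK
    have hn₁K : n₁ ≤ K := le_trans (by calc n₁ = 1 * 1 * n₁ * 1 := by ring
      _ ≤ m₁ * m₂ * n₁ * n₂ :=
        Nat.mul_le_mul (Nat.mul_le_mul (Nat.mul_le_mul h3 h4) (le_refl n₁)) h6) hPK
    have hn₂K : n₂ ≤ K := le_trans (by calc n₂ = 1 * 1 * 1 * n₂ := by ring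
      _ ≤ m₁ * m₂ * n₁ * n₂ :=
        Nat.mul_le_mul (Nat.mul_le_mul (Nat.mul_le_mul h3 h4) h5) (le_refl n₂)) hPK
    exact ⟨Finset.mem_Icc.2 ⟨h1, hab a h7⟩, Finset.mem_Icc.2 ⟨h2, hab b h8⟩,
      Finset.mem_Icc.2 ⟨h3, hm₁K⟩, Finset.mem_Icc.2 ⟨h4, hm₂K⟩,
      Finset.mem_Icc.2 ⟨h5, hn₁K⟩, Finset.mem_Icc.2 ⟨h6, hn₂K⟩⟩
  -- the two comparison functions
  set ψ₁ : (ℕ×ℕ×ℕ) → (ℕ×ℕ×ℕ) → ℝ := fun u v =>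
    if 1 ≤ u.1 ∧ 1 ≤ v.1 ∧ 1 ≤ u.2.1 ∧ 1 ≤ u.2.2 ∧ 1 ≤ v.2.1 ∧ 1 ≤ v.2.2 ∧
        (u.1 : ℝ) ≤ T ^ θ ∧ (v.1 : ℝ) ≤ T ^ θ ∧
        ((u.2.1 * u.2.2 * v.2.1 * v.2.2 : ℕ) : ℝ) ≤ T ^ (2 + ε) ∧
        (u.1 * u.2.1 * u.2.2 : ℤ) ≠ (v.1 * v.2.1 * v.2.2 : ℤ) ∧
        ((|(u.1 * u.2.1 * u.2.2 : ℤ) - (v.1 * v.2.1 * v.2.2 : ℤ)| : ℤ) : ℝ) ≤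
          Real.sqrt ((u.1 * v.1 * u.2.1 * u.2.2 * v.2.1 * v.2.2 : ℕ) : ℝ) * T ^ (-1 + ε)
    then ((u.1:ℝ) * u.2.1 * u.2.2)⁻¹ else 0 with hψ₁def
  set ψ₂ : (ℕ×ℕ×ℕ) → (ℕ×ℕ×ℕ) → ℝ := fun u v =>
    if 1 ≤ v.1 ∧ 1 ≤ u.1 ∧ 1 ≤ v.2.1 ∧ 1 ≤ v.2.2 ∧ 1 ≤ u.2.1 ∧ 1 ≤ u.2.2 ∧
        (v.1 : ℝ) ≤ T ^ θ ∧ (u.1 : ℝ) ≤ T ^ θ ∧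
        ((v.2.1 * v.2.2 * u.2.1 * u.2.2 : ℕ) : ℝ) ≤ T ^ (2 + ε) ∧
        (v.1 * v.2.1 * v.2.2 : ℤ) ≠ (u.1 * u.2.1 * u.2.2 : ℤ) ∧
        ((|(v.1 * v.2.1 * v.2.2 : ℤ) - (u.1 * u.2.1 * u.2.2 : ℤ)| : ℤ) : ℝ) ≤
          Real.sqrt ((v.1 * u.1 * v.2.1 * v.2.2 * u.2.1 * u.2.2 : ℕ) : ℝ) * T ^ (-1 + ε)
    then ((u.1:ℝ) * u.2.1 * u.2.2)⁻¹ else 0 with hψ₂def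
  -- support of F
  have hsupp : ∀ a b m₁ m₂ n₁ n₂, F a b m₁ m₂ n₁ n₂ ≠ 0 →
      a ∈ I ∧ b ∈ I ∧ m₁ ∈ I ∧ m₂ ∈ I ∧ n₁ ∈ I ∧ n₂ ∈ I := by
    intro a b m₁ m₂ n₁ n₂ hne
    rw [hF] at hne
    dsimp only at hne
    by_cases hc : 1 ≤ a ∧ 1 ≤ b ∧ 1 ≤ m₁ ∧ 1 ≤ m₂ ∧ 1 ≤ n₁ ∧ 1 ≤ n₂ ∧
        (a : ℝ) ≤ T ^ θ ∧ (b : ℝ) ≤ T ^ θ ∧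
        ((m₁ * m₂ * n₁ * n₂ : ℕ) : ℝ) ≤ T ^ (2 + ε) ∧
        (a * m₁ * m₂ : ℤ) ≠ (b * n₁ * n₂ : ℤ) ∧
        ((|(a * m₁ * m₂ : ℤ) - (b * n₁ * n₂ : ℤ)| : ℤ) : ℝ) ≤
          Real.sqrt ((a * b * m₁ * m₂ * n₁ * n₂ : ℕ) : ℝ) * T ^ (-1 + ε)
    · exact hmem _ _ _ _ _ _ hc
    · rw [if_neg hc] at hne; exact absurd rfl hne
  -- pointwise bound
  have hpt : ∀ a b m₁ m₂ n₁ n₂ : ℕ, F a b m₁ m₂ n₁ n₂ ≤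
      ψ₁ (a, m₁, m₂) (b, n₁, n₂) + ψ₂ (b, n₁, n₂) (a, m₁, m₂) := by
    intro a b m₁ m₂ n₁ n₂
    rw [hF, hψ₁def, hψ₂def]
    dsimp only
    by_cases hc : 1 ≤ a ∧ 1 ≤ b ∧ 1 ≤ m₁ ∧ 1 ≤ m₂ ∧ 1 ≤ n₁ ∧ 1 ≤ n₂ ∧
        (a : ℝ) ≤ T ^ θ ∧ (b : ℝ) ≤ T ^ θ ∧
        ((m₁ * m₂ * n₁ * n₂ : ℕ) : ℝ) ≤ T ^ (2 + ε) ∧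
        (a * m₁ * m₂ : ℤ) ≠ (b * n₁ * n₂ : ℤ) ∧
        ((|(a * m₁ * m₂ : ℤ) - (b * n₁ * n₂ : ℤ)| : ℤ) : ℝ) ≤
          Real.sqrt ((a * b * m₁ * m₂ * n₁ * n₂ : ℕ) : ℝ) * T ^ (-1 + ε)
    · rw [if_pos hc, if_pos hc, if_pos hc]
      exact inv_bound a b m₁ m₂ n₁ n₂ hc.1 hc.2.1 hc.2.2.1 hc.2.2.2.1
        hc.2.2.2.2.1 hc.2.2.2.2.2.1
    · rw [if_neg hc, if_neg hc, if_neg hc]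
      norm_num
  -- core hypotheses
  have hψ₁0 : ∀ u v, 0 ≤ ψ₁ u v := by
    intro u v; rw [hψ₁def]; dsimp only; split
    · positivity
    · exact le_refl 0
  have hψ₂0 : ∀ u v, 0 ≤ ψ₂ u v := by
    intro u v; rw [hψ₂def]; dsimp only; split
    · positivity
    · exact le_refl 0
  have hψ₁le : ∀ u v, ψ₁ u v ≤ ((u.1:ℝ) * u.2.1 * u.2.2)⁻¹ := by
    intro u v; rw [hψ₁def]; dsimp only; split
    · exact le_refl _
    · positivity
  have hψ₂le : ∀ u v, ψ₂ u v ≤ ((u.1:ℝ) * u.2.1 * u.2.2)⁻¹ := by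
    intro u v; rw [hψ₂def]; dsimp only; split
    · exact le_refl _
    · positivity
  have hψ₁fact : ∀ u v, ψ₁ u v ≠ 0 →
      (1 ≤ v.1 ∧ 1 ≤ v.2.1 ∧ 1 ≤ v.2.2) ∧
      v.1 * v.2.1 * v.2.2 ≠ u.1 * u.2.1 * u.2.2 ∧
      |((v.1 * v.2.1 * v.2.2 : ℕ) : ℝ) - ((u.1 * u.2.1 * u.2.2 : ℕ) : ℝ)| ≤ T ^ (θ + 3*ε/2) := by
    intro u v hne
    rw [hψ₁def] at hne; dsimp only at hne
    split at hne
    case isTrue h =>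
      obtain ⟨h1, h2, h3, h4, h5, h6, h7, h8, h9, h10, h11⟩ := h
      refine ⟨⟨h2, h5, h6⟩, ?_, ?_⟩
      · intro heq; exact h10 (by exact_mod_cast heq.symm)
      · exact abs_key ε θ T hε hθ hT u.1 v.1 u.2.1 u.2.2 v.2.1 v.2.2 h7 h8 h9 h11
    case isFalse h => exact absurd rfl hne
  have hψ₂fact : ∀ u v, ψ₂ u v ≠ 0 →
      (1 ≤ v.1 ∧ 1 ≤ v.2.1 ∧ 1 ≤ v.2.2) ∧
      v.1 * v.2.1 * v.2.2 ≠ u.1 * u.2.1 * u.2.2 ∧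
      |((v.1 * v.2.1 * v.2.2 : ℕ) : ℝ) - ((u.1 * u.2.1 * u.2.2 : ℕ) : ℝ)| ≤ T ^ (θ + 3*ε/2) := by
    intro u v hne
    rw [hψ₂def] at hne; dsimp only at hne
    split at hne
    case isTrue h =>
      obtain ⟨h1, h2, h3, h4, h5, h6, h7, h8, h9, h10, h11⟩ := h
      refine ⟨⟨h1, h3, h4⟩, ?_, ?_⟩
      · intro heq; exact h10 (by exact_mod_cast heq)
      · rw [abs_sub_comm]
        exact abs_key ε θ T hε hθ hT v.1 u.1 v.2.1 v.2.2 u.2.1 u.2.2 h7 h8 h9 h11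
    case isFalse h => exact absurd rfl hne
  have hcore₁ := core_bound ε θ T δ C₀ hε hθ hT hδ0 hC₀ hdiv ψ₁ hψ₁0 hψ₁le hψ₁fact
  have hcore₂ := core_bound ε θ T δ C₀ hε hθ hT hδ0 hC₀ hdiv ψ₂ hψ₂0 hψ₂le hψ₂fact
  set B : ℝ := (1 + Real.log (T ^ (θ+3+ε)))^3 *
      (4 * T ^ (θ+3*ε/2) * (C₀ * (3 * T ^ (3*(θ+3+ε))) ^ δ)^2) with hBdef
  -- numeric estimates
  have hC₀0 : (0:ℝ) ≤ C₀ := by linarith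
  have hA1 : 1 + Real.log (T ^ (θ+3+ε)) ≤ c₁ * T ^ γ := by
    rw [Real.log_rpow hT0]
    have h1 : Real.log T ≤ T ^ γ / γ := Real.log_le_rpow_div hT0.le hγ0
    have h2 : (θ+3+ε) * Real.log T ≤ (θ+3+ε) * (T ^ γ / γ) :=
      mul_le_mul_of_nonneg_left h1 (by linarith)
    have h3 : (θ+3+ε) * (T ^ γ / γ) = ((θ+3+ε)/γ) * T ^ γ := by ring
    have h4 : (1:ℝ) ≤ T ^ γ := Real.one_le_rpow hT1 hγ0.le
    have h5 : c₁ * T ^ γ = T ^ γ + ((θ+3+ε)/γ) * T ^ γ := by rw [hc₁def]; ring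
    rw [h5]; rw [h3] at h2; linarith
  have hlog0 : (0:ℝ) ≤ 1 + Real.log (T ^ (θ+3+ε)) := by
    have : (0:ℝ) ≤ Real.log (T ^ (θ+3+ε)) :=
      Real.log_nonneg (Real.one_le_rpow hT1 (by linarith))
    linarith
  have hA1c : (1 + Real.log (T ^ (θ+3+ε)))^3 ≤ c₁^3 * T ^ (ε/24) := by
    have h1 := pow_le_pow_left₀ hlog0 hA1 3
    have h2 : (c₁ * T ^ γ)^3 = c₁^3 * (T ^ γ)^(3:ℕ) := by ring
    have h3 : (T ^ γ)^(3:ℕ) = T ^ (ε/24) := by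
      rw [← Real.rpow_natCast (T ^ γ) 3, ← Real.rpow_mul hT0.le]
      congr 1
      rw [hγdef]; push_cast; ring
    rw [h2, h3] at h1; exact h1
  have hA2 : (C₀ * (3 * T ^ (3*(θ+3+ε))) ^ δ)^2 ≤ 9 * C₀^2 * T ^ (ε/4) := by
    have h1 : (3 * T ^ (3*(θ+3+ε))) ^ δ = (3:ℝ) ^ δ * (T ^ (3*(θ+3+ε))) ^ δ :=
      Real.mul_rpow (by norm_num) (by positivity)
    have h2 : ((3:ℝ)) ^ δ ≤ 3 := by
      calc (3:ℝ) ^ δ ≤ (3:ℝ) ^ (1:ℝ) := Real.rpow_le_rpow_of_exponent_le (by norm_num) hδ1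
        _ = 3 := Real.rpow_one 3
    have h3 : (T ^ (3*(θ+3+ε))) ^ δ = T ^ (ε/8) := by
      rw [← Real.rpow_mul hT0.le]
      congr 1
      rw [hδdef]; field_simp; ring
    have h4 : (3 * T ^ (3*(θ+3+ε))) ^ δ ≤ 3 * T ^ (ε/8) := by
      rw [h1, h3]
      exact mul_le_mul_of_nonneg_right h2 (by positivity)
    have h5 : C₀ * (3 * T ^ (3*(θ+3+ε))) ^ δ ≤ C₀ * (3 * T ^ (ε/8)) :=
      mul_le_mul_of_nonneg_left h4 hC₀0
    have h6 := pow_le_pow_left₀ (mul_nonneg hC₀0 (by positivity)) h5 2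
    have h7 : (C₀ * (3 * T ^ (ε/8)))^2 = 9 * C₀^2 * (T ^ (ε/8))^(2:ℕ) := by ring
    have h8 : (T ^ (ε/8))^(2:ℕ) = T ^ (ε/4) := by
      rw [← Real.rpow_natCast (T ^ (ε/8)) 2, ← Real.rpow_mul hT0.le]
      congr 1; push_cast; ring
    rw [h7, h8] at h6
    exact h6
  have hBle : B ≤ (c₁^3 * T ^ (ε/24)) * (4 * T ^ (θ+3*ε/2) * (9 * C₀^2 * T ^ (ε/4))) := by
    rw [hBdef]
    have hx : 4 * T ^ (θ+3*ε/2) * (C₀ * (3 * T ^ (3*(θ+3+ε))) ^ δ)^2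
        ≤ 4 * T ^ (θ+3*ε/2) * (9 * C₀^2 * T ^ (ε/4)) :=
      mul_le_mul_of_nonneg_left hA2 (by positivity)
    exact mul_le_mul hA1c hx (by positivity)
      (mul_nonneg (pow_nonneg hc₁0 3) (by positivity))
  have hnum : B + B ≤ 72 * c₁ ^ 3 * C₀ ^ 2 * T ^ (θ + 2 * ε) := by
    have e2 : T^(θ+3*ε/2) * T^(ε/4) = T^(θ+3*ε/2+ε/4) := (Real.rpow_add hT0 _ _).symm
    have e3 : T^(ε/24) * T^(θ+3*ε/2+ε/4) = T^(ε/24+(θ+3*ε/2+ε/4)) := (Real.rpow_add hT0 _ _).symm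
    have e4 : T^(ε/24+(θ+3*ε/2+ε/4)) ≤ T^(θ+2*ε) :=
      Real.rpow_le_rpow_of_exponent_le hT1 (by linarith)
    have hcoef : (0:ℝ) ≤ 72 * c₁^3 * C₀^2 :=
      mul_nonneg (mul_nonneg (by norm_num) (pow_nonneg hc₁0 3)) (sq_nonneg C₀)
    calc B + B ≤ 2 * ((c₁^3 * T ^ (ε/24)) * (4 * T ^ (θ+3*ε/2) * (9 * C₀^2 * T ^ (ε/4)))) := by
          linarith [hBle]
      _ = 72 * c₁^3 * C₀^2 * (T^(ε/24) * (T^(θ+3*ε/2) * T^(ε/4))) := by ring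
      _ = 72 * c₁^3 * C₀^2 * T^(ε/24+(θ+3*ε/2+ε/4)) := by rw [e2, e3]
      _ ≤ 72 * c₁^3 * C₀^2 * T^(θ+2*ε) := mul_le_mul_of_nonneg_left e4 hcoef
  -- final chain
  calc (∑' a, ∑' b, ∑' m₁, ∑' m₂, ∑' n₁, ∑' n₂, F a b m₁ m₂ n₁ n₂)
      = ∑ a ∈ I, ∑ b ∈ I, ∑ m₁ ∈ I, ∑ m₂ ∈ I, ∑ n₁ ∈ I, ∑ n₂ ∈ I, F a b m₁ m₂ n₁ n₂ :=
        tsum6_collapse F I hsupp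
    _ = ∑ x ∈ I ×ˢ (I ×ˢ (I ×ˢ (I ×ˢ (I ×ˢ I)))),
          F x.1 x.2.1 x.2.2.1 x.2.2.2.1 x.2.2.2.2.1 x.2.2.2.2.2 := (sum6_nested_to_flat F I).symm
    _ ≤ ∑ x ∈ I ×ˢ (I ×ˢ (I ×ˢ (I ×ˢ (I ×ˢ I)))),
          (ψ₁ (x.1, x.2.2.1, x.2.2.2.1) (x.2.1, x.2.2.2.2.1, x.2.2.2.2.2)
            + ψ₂ (x.2.1, x.2.2.2.2.1, x.2.2.2.2.2) (x.1, x.2.2.1, x.2.2.2.1)) :=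
        Finset.sum_le_sum (fun x _ => hpt x.1 x.2.1 x.2.2.1 x.2.2.2.1 x.2.2.2.2.1 x.2.2.2.2.2)
    _ = (∑ x ∈ I ×ˢ (I ×ˢ (I ×ˢ (I ×ˢ (I ×ˢ I)))),
          ψ₁ (x.1, x.2.2.1, x.2.2.2.1) (x.2.1, x.2.2.2.2.1, x.2.2.2.2.2))
        + (∑ x ∈ I ×ˢ (I ×ˢ (I ×ˢ (I ×ˢ (I ×ˢ I)))),
          ψ₂ (x.2.1, x.2.2.2.2.1, x.2.2.2.2.2) (x.1, x.2.2.1, x.2.2.2.1)) :=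
        Finset.sum_add_distrib
    _ = (∑ u ∈ I ×ˢ (I ×ˢ I), ∑ v ∈ I ×ˢ (I ×ˢ I), ψ₁ u v)
        + (∑ u ∈ I ×ˢ (I ×ˢ I), ∑ v ∈ I ×ˢ (I ×ˢ I), ψ₂ u v) := by
        rw [flat_to_uv ψ₁ I, flat_to_uv' ψ₂ I]
    _ ≤ B + B := add_le_add hcore₁ hcore₂
    _ ≤ 72 * c₁ ^ 3 * C₀ ^ 2 * T ^ (θ + 2 * ε) := hnum
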